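/- Let α, β, k > 0 and 0 < p < q with k·p < 1 and k·q > 1, and let γ := Γ((1−k·p)/(q−p)) · Γ((k·q−1)/(q−p)) / (α^k · Γ(k) · (q−p)) · (α/β)^((1−k·p)/(q−p)). If x : ℝ → ℝ satisfies, for every t ≥ 0, that x is differentiable at t with derivative x'(t) = −(α·|x(t)|^p + β·|x(t)|^q)^k · sign(x(t)), then x(t) = 0 for every t ≥ γ. (Fixed-time stability of the scalar system ẋ = −(α|x|^p + β|x|^q)^k sign(x) with settling time bounded by γ, uniformly in the initial condition.) -/

import Mathlib

open Real MeasureTheory Set intervalIntegral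

private lemma real_beta {a b : ℝ} (ha : 0 < a) (hb : 0 < b) :
    ∫ x in (0:ℝ)..1, x ^ (a - 1) * (1 - x) ^ (b - 1) = Gamma a * Gamma b / Gamma (a + b) := by
  have key := Complex.Gamma_mul_Gamma_eq_betaIntegral (s := (a:ℂ)) (t := (b:ℂ))
    (by simpa using ha) (by simpa using hb)
  have hβ : Complex.betaIntegral a b =
      ((∫ x in (0:ℝ)..1, x ^ (a - 1) * (1 - x) ^ (b - 1) : ℝ) : ℂ) := by
    rw [Complex.betaIntegral, ← intervalIntegral.integral_ofReal]
    refine intervalIntegral.integral_congr fun x hx => ?_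
    rw [uIcc_of_le zero_le_one] at hx
    rw [show ((a:ℂ) - 1) = ((a - 1 : ℝ) : ℂ) by push_cast; ring,
      show ((b:ℂ) - 1) = ((b - 1 : ℝ) : ℂ) by push_cast; ring,
      show (1 - (x:ℂ)) = ((1 - x : ℝ) : ℂ) by push_cast; ring,
      ← Complex.ofReal_cpow hx.1, ← Complex.ofReal_cpow (by linarith [hx.2] : (0:ℝ) ≤ 1 - x)]
    push_cast
    ring
  have hg : ∀ c : ℝ, Complex.Gamma (c : ℂ) = (Real.Gamma c : ℂ) := fun c =>
    Complex.Gamma_ofReal c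
  rw [hβ, show ((a:ℂ) + b) = ((a + b : ℝ) : ℂ) by push_cast; ring, hg, hg, hg,
    ← Complex.ofReal_mul, ← Complex.ofReal_mul] at key
  have h2 := Complex.ofReal_injective key
  have hG : Real.Gamma (a + b) ≠ 0 := (Real.Gamma_pos_of_pos (by linarith)).ne'
  field_simp
  linarith [h2]

private lemma beta_Ioi {a b : ℝ} (ha : 0 < a) (hb : 0 < b) :
    ∫ t in Ioi (0:ℝ), t ^ (a - 1) * (1 + t) ^ (-(a + b)) =
      Gamma a * Gamma b / Gamma (a + b) := by
  set f : ℝ → ℝ := fun x => x / (1 - x) with hf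
  set f' : ℝ → ℝ := fun x => ((1 - x) ^ 2)⁻¹ with hf'
  have hderiv : ∀ x ∈ Ioo (0:ℝ) 1, HasDerivWithinAt f (f' x) (Ioo 0 1) x := by
    intro x hx
    have h1x : (1 : ℝ) - x ≠ 0 := by have := hx.2; intro h; linarith [sub_eq_zero.mp h]
    have : HasDerivAt f ((1 * (1 - x) - x * (-1)) / (1 - x) ^ 2) x := by
      exact (hasDerivAt_id x).div ((hasDerivAt_id x).const_sub 1) h1x
    refine this.hasDerivWithinAt.congr_deriv ?_
    symm
    show ((1 - x) ^ 2)⁻¹ = _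
    rw [inv_eq_one_div]; congr 1; ring
  have hinj : InjOn f (Ioo (0:ℝ) 1) := by
    intro x hx y hy hxy
    have h1x : (1 : ℝ) - x ≠ 0 := by have := hx.2; intro h; linarith [sub_eq_zero.mp h]
    have h1y : (1 : ℝ) - y ≠ 0 := by have := hy.2; intro h; linarith [sub_eq_zero.mp h]
    have hxy' : x / (1 - x) = y / (1 - y) := hxy
    rw [div_eq_div_iff h1x h1y] at hxy'
    nlinarith [hxy']
  have himg : f '' Ioo (0:ℝ) 1 = Ioi 0 := by
    ext t
    simp only [mem_image, mem_Ioi, mem_Ioo]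
    constructor
    · rintro ⟨y, ⟨hy0, hy1⟩, rfl⟩
      exact div_pos hy0 (by linarith)
    · intro ht
      refine ⟨t / (1 + t), ⟨div_pos ht (by linarith), by rw [div_lt_one (by linarith)]; linarith⟩, ?_⟩
      have : (1:ℝ) + t ≠ 0 := by positivity
      show t / (1 + t) / (1 - t / (1 + t)) = t
      rw [one_sub_div this, add_sub_cancel_right, div_div_div_cancel_right₀ this, div_one]
  have key := integral_image_eq_integral_abs_deriv_smul measurableSet_Ioo hderiv hinj
    (fun t => t ^ (a - 1) * (1 + t) ^ (-(a + b)))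
  rw [himg] at key
  rw [key]
  rw [← real_beta ha hb, intervalIntegral.integral_of_le zero_le_one,
    MeasureTheory.integral_Ioc_eq_integral_Ioo]
  refine setIntegral_congr_fun measurableSet_Ioo fun x hx => ?_
  obtain ⟨hx0, hx1⟩ := hx
  have h1x : (0:ℝ) < 1 - x := by linarith
  have hfx : (1:ℝ) + f x = (1 - x)⁻¹ := by
    rw [hf]; field_simp; ring
  rw [smul_eq_mul, hfx, hf]
  dsimp only
  rw [div_rpow hx0.le h1x.le, inv_rpow h1x.le, ← rpow_neg h1x.le, neg_neg,
    div_eq_mul_inv (x ^ (a-1)), ← rpow_neg h1x.le]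
  have e2 : |f' x| = (1 - x) ^ (-(2:ℝ)) := by
    rw [hf', abs_of_pos (by positivity)]
    dsimp only
    rw [← Real.rpow_natCast (1 - x) 2, ← rpow_neg h1x.le]
    norm_num
  rw [e2]
  have e3 : (1-x) ^ (-(2:ℝ)) * ((1-x) ^ (-(a-1)) * (1-x) ^ (a+b)) = (1-x) ^ (b-1) := by
    rw [← Real.rpow_add h1x, ← Real.rpow_add h1x]
    congr 1
    ring
  rw [← e3]
  ring

private lemma main_integral (α β k p q : ℝ) (hα : 0 < α) (hβ : 0 < β) (hk : 0 < k)
    (hp : 0 < p) (hpq : p < q) (hkp : k * p < 1) (hkq : 1 < k * q) :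
    ∫ u in Ioi (0:ℝ), (α * u ^ p + β * u ^ q) ^ (-k) =
      Real.Gamma ((1 - k * p) / (q - p)) * Real.Gamma ((k * q - 1) / (q - p)) /
        (α ^ k * Real.Gamma k * (q - p)) * (α / β) ^ ((1 - k * p) / (q - p)) := by
  have hqp : (0:ℝ) < q - p := by linarith
  set e : ℝ := (q - p)⁻¹ with he
  have he0 : 0 < e := inv_pos.mpr hqp
  set c : ℝ := (α / β) ^ e with hc
  have hc0 : 0 < c := rpow_pos_of_pos (div_pos hα hβ) e
  set g : ℝ → ℝ := fun u => (α * u ^ p + β * u ^ q) ^ (-k) with hg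
  set a : ℝ := (1 - k * p) * e with ha
  set b : ℝ := (k * q - 1) * e with hb
  have ha0 : 0 < a := mul_pos (by linarith) he0
  have hb0 : 0 < b := mul_pos (by linarith) he0
  have hab : a + b = k := by
    rw [ha, hb, he]
    field_simp
    ring
  have step1 : ∫ u in Ioi (0:ℝ), g u = c * ∫ x in Ioi (0:ℝ), g (c * x) := by
    rw [integral_comp_mul_left_Ioi g 0 hc0, mul_zero, smul_eq_mul, ← mul_assoc,
      mul_inv_cancel₀ hc0.ne', one_mul]
  have step2 : ∫ x in Ioi (0:ℝ), g (c * x) =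
      ∫ s in Ioi (0:ℝ), (e * s ^ (e - 1)) * g (c * s ^ e) := by
    rw [← integral_comp_rpow_Ioi_of_pos (g := fun x => g (c * x)) he0]
    simp [smul_eq_mul]
  have step3 : ∀ s ∈ Ioi (0:ℝ), (e * s ^ (e - 1)) * g (c * s ^ e) =
      (e * α ^ (-k) * c ^ (-(p * k))) * (s ^ (a - 1) * (1 + s) ^ (-(a + b))) := by
    intro s hs
    have hs0 : (0:ℝ) < s := hs
    have hu : (0:ℝ) < c * s ^ e := mul_pos hc0 (rpow_pos_of_pos hs0 e)
    have hfac : α * (c * s ^ e) ^ p + β * (c * s ^ e) ^ q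
        = (α * c ^ p * s ^ (e * p)) * (1 + s) := by
      rw [mul_rpow hc0.le (rpow_pos_of_pos hs0 e).le, mul_rpow hc0.le (rpow_pos_of_pos hs0 e).le,
        ← rpow_mul hs0.le, ← rpow_mul hs0.le]
      have hcq : c ^ q = c ^ p * (α / β) := by
        rw [hc, ← rpow_mul (div_pos hα hβ).le, ← rpow_mul (div_pos hα hβ).le,
          ← Real.rpow_add_one (div_pos hα hβ).ne' (e * p)]
        congr 1
        rw [he]; field_simp; ring
      have hsq : s ^ (e * q) = s ^ (e * p) * s := by
        rw [← Real.rpow_add_one hs0.ne' (e * p)]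
        congr 1
        rw [he]; field_simp; ring
      rw [hcq, hsq]
      field_simp
    rw [hg]
    dsimp only
    rw [hfac, mul_rpow (by positivity) (by positivity),
      mul_rpow (by positivity : (0:ℝ) ≤ α * c ^ p) (rpow_nonneg hs0.le _),
      mul_rpow hα.le (rpow_nonneg hc0.le _),
      ← Real.rpow_mul hc0.le, ← Real.rpow_mul hs0.le, hab,
      show p * -k = -(p * k) by ring]
    have hsa : s ^ (e - 1) * s ^ (e * p * -k) = s ^ (a - 1) := by
      rw [← Real.rpow_add hs0]
      congr 1
      rw [ha]; ring
    rw [← hsa]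
    ring
  calc ∫ u in Ioi (0:ℝ), g u
      = c * ∫ s in Ioi (0:ℝ), (e * α ^ (-k) * c ^ (-(p * k))) *
          (s ^ (a - 1) * (1 + s) ^ (-(a + b))) := by
        rw [step1, step2, setIntegral_congr_fun measurableSet_Ioi step3]
    _ = c * ((e * α ^ (-k) * c ^ (-(p * k))) *
          ∫ s in Ioi (0:ℝ), s ^ (a - 1) * (1 + s) ^ (-(a + b))) := by
        rw [MeasureTheory.integral_const_mul]
    _ = c * ((e * α ^ (-k) * c ^ (-(p * k))) * (Gamma a * Gamma b / Gamma (a + b))) := by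
        rw [beta_Ioi ha0 hb0]
    _ = Real.Gamma ((1 - k * p) / (q - p)) * Real.Gamma ((k * q - 1) / (q - p)) /
        (α ^ k * Real.Gamma k * (q - p)) * (α / β) ^ ((1 - k * p) / (q - p)) := by
        have h1 : c * c ^ (-(p * k)) = (α / β) ^ ((1 - k * p) / (q - p)) := by
          nth_rewrite 1 [← Real.rpow_one c]
          rw [← Real.rpow_add hc0, hc, ← Real.rpow_mul (div_pos hα hβ).le]
          congr 1
          rw [he]
          field_simp
          ring
        rw [hab, show a = (1 - k * p) / (q - p) by rw [ha, he]; ring,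
          show b = (k * q - 1) / (q - p) by rw [hb, he]; ring,
          Real.rpow_neg hα.le, ← h1, he]
        have hG : Real.Gamma k ≠ 0 := (Real.Gamma_pos_of_pos hk).ne'
        have hA : α ^ k ≠ 0 := (rpow_pos_of_pos hα k).ne'
        field_simp

private noncomputable def gg (α β k p q : ℝ) (u : ℝ) : ℝ :=
  (α * u ^ p + β * u ^ q) ^ (-k)

private noncomputable def GG (α β k p q : ℝ) (u : ℝ) : ℝ :=
  ∫ v in Ioc 0 u, gg α β k p q v

section aux
variable {α β k p q : ℝ} (hα : 0 < α) (hβ : 0 < β) (hk : 0 < k)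
    (hp : 0 < p) (hpq : p < q) (hkp : k * p < 1) (hkq : 1 < k * q)

include hα hβ in
private lemma gg_pos {u : ℝ} (hu : 0 < u) : 0 < gg α β k p q u := by
  have : 0 < α * u ^ p + β * u ^ q := by positivity
  exact rpow_pos_of_pos this _

include hα hβ in
private lemma gg_contOn : ContinuousOn (gg α β k p q) (Ioi 0) := by
  intro u hu
  have hu0 : (0:ℝ) < u := hu
  apply ContinuousAt.continuousWithinAt
  have h1 : ContinuousAt (fun u : ℝ => α * u ^ p + β * u ^ q) u := by
    have hcp := Real.continuousAt_rpow_const u p (Or.inl hu0.ne')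
    have hcq := Real.continuousAt_rpow_const u q (Or.inl hu0.ne')
    exact ((continuousAt_const.mul hcp).add (continuousAt_const.mul hcq))
  exact h1.rpow_const (Or.inl (by positivity))

include hα hβ hk hp hpq hkp hkq in
private lemma gg_integrable : IntegrableOn (gg α β k p q) (Ioi 0) := by
  have hqp : 0 < q - p := by linarith
  rw [← Ioc_union_Ioi_eq_Ioi (zero_le_one)]
  apply MeasureTheory.IntegrableOn.union
  · have hbound : IntegrableOn (fun u : ℝ => α ^ (-k) * u ^ (-(k * p))) (Ioc 0 1) := by
      have := (intervalIntegral.intervalIntegrable_rpow' (a := 0) (b := 1)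
        (by linarith : (-1:ℝ) < -(k * p)))
      rw [intervalIntegrable_iff_integrableOn_Ioc_of_le zero_le_one] at this
      exact this.const_mul _
    refine hbound.mono' ?_ ?_
    · exact ((gg_contOn hα hβ).mono Ioc_subset_Ioi_self).aestronglyMeasurable
        measurableSet_Ioc
    · rw [ae_restrict_iff' measurableSet_Ioc]
      refine ae_of_all _ fun u hu => ?_
      have hu0 : 0 < u := hu.1
      have hS : 0 < α * u ^ p + β * u ^ q := by positivity
      simp only [gg, Real.norm_eq_abs]
      rw [abs_of_nonneg (rpow_nonneg hS.le _)]
      have h1 : α * u ^ p ≤ α * u ^ p + β * u ^ q :=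
        le_add_of_nonneg_right (by positivity)
      have h2 : (α * u ^ p + β * u ^ q) ^ (-k) ≤ (α * u ^ p) ^ (-k) :=
        rpow_le_rpow_of_nonpos (by positivity) h1 (by linarith)
      refine h2.trans_eq ?_
      rw [mul_rpow hα.le (rpow_nonneg hu0.le _), ← Real.rpow_mul hu0.le]
      congr 1
      ring
  · have hbound : IntegrableOn (fun u : ℝ => β ^ (-k) * u ^ (-(k * q))) (Ioi 1) :=
      (integrableOn_Ioi_rpow_of_lt (by linarith) one_pos).const_mul _
    refine hbound.mono' ?_ ?_
    · exact ((gg_contOn hα hβ).mono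
        (Ioi_subset_Ioi zero_le_one)).aestronglyMeasurable measurableSet_Ioi
    · rw [ae_restrict_iff' measurableSet_Ioi]
      refine ae_of_all _ fun u hu => ?_
      have hu0 : (0:ℝ) < u := lt_trans one_pos hu
      have hS : 0 < α * u ^ p + β * u ^ q := by positivity
      simp only [gg, Real.norm_eq_abs]
      rw [abs_of_nonneg (rpow_nonneg hS.le _)]
      have h1 : β * u ^ q ≤ α * u ^ p + β * u ^ q :=
        le_add_of_nonneg_left (by positivity)
      have h2 : (α * u ^ p + β * u ^ q) ^ (-k) ≤ (β * u ^ q) ^ (-k) :=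
        rpow_le_rpow_of_nonpos (by positivity) h1 (by linarith)
      refine h2.trans_eq ?_
      rw [mul_rpow hβ.le (rpow_nonneg hu0.le _), ← Real.rpow_mul hu0.le]
      congr 1
      ring

include hα hβ in
private lemma GG_nonneg {u : ℝ} : 0 ≤ GG α β k p q u :=
  setIntegral_nonneg measurableSet_Ioc fun v hv =>
    (gg_pos hα hβ hv.1).le

include hα hβ hk hp hpq hkp hkq in
private lemma GG_lt {u : ℝ} (hu : 0 < u) :
    GG α β k p q u < ∫ v in Ioi 0, gg α β k p q v := by
  have hint := gg_integrable hα hβ hk hp hpq hkp hkq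
  have hsplit : (∫ v in Ioi 0, gg α β k p q v) =
      GG α β k p q u + ∫ v in Ioi u, gg α β k p q v := by
    rw [GG, ← MeasureTheory.setIntegral_union (Ioc_disjoint_Ioi le_rfl) measurableSet_Ioi
      (hint.mono_set Ioc_subset_Ioi_self) (hint.mono_set (Ioi_subset_Ioi hu.le)),
      Ioc_union_Ioi_eq_Ioi hu.le]
  rw [hsplit]
  have hpos : 0 < ∫ v in Ioi u, gg α β k p q v := by
    have hineq : (∫ v in Ioc u (u+1), gg α β k p q v) ≤ ∫ v in Ioi u, gg α β k p q v := by
      apply MeasureTheory.setIntegral_mono_set (hint.mono_set (Ioi_subset_Ioi hu.le))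
      · filter_upwards [ae_restrict_mem measurableSet_Ioi] with v hv
        exact (gg_pos hα hβ (lt_trans hu hv)).le
      · exact ae_of_all _ Ioc_subset_Ioi_self
    refine lt_of_lt_of_le ?_ hineq
    rw [← intervalIntegral.integral_of_le (by linarith)]
    apply intervalIntegral.intervalIntegral_pos_of_pos_on
    · rw [intervalIntegrable_iff_integrableOn_Ioc_of_le (by linarith)]
      exact hint.mono_set (Ioc_subset_Ioi_self.trans (Ioi_subset_Ioi hu.le))
    · exact fun v hv => gg_pos hα hβ (lt_trans hu hv.1)
    · linarith
  linarith

include hα hβ hk hp hpq hkp hkq in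
private lemma GG_hasDeriv {u : ℝ} (hu : 0 < u) :
    HasDerivAt (GG α β k p q) (gg α β k p q u) u := by
  have hint := gg_integrable hα hβ hk hp hpq hkp hkq
  have hu2 : 0 < u / 2 := by linarith
  have claim : ∀ w ∈ Ioi (0:ℝ), GG α β k p q w =
      GG α β k p q (u/2) + ∫ t in (u/2)..w, gg α β k p q t := by
    intro w hw
    rcases le_total (u/2) w with h | h
    · rw [intervalIntegral.integral_of_le h, GG, GG,
        ← MeasureTheory.setIntegral_union (Ioc_disjoint_Ioc_of_le le_rfl) measurableSet_Ioc
          (hint.mono_set (Ioc_subset_Ioi_self.trans (Ioi_subset_Ioi le_rfl)))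
          (hint.mono_set (fun v hv => lt_of_lt_of_le hu2 hv.1.le)),
        Ioc_union_Ioc_eq_Ioc hu2.le h]
    · rw [intervalIntegral.integral_of_ge h, GG, GG, eq_comm, add_neg_eq_iff_eq_add, eq_comm,
        ← MeasureTheory.setIntegral_union (Ioc_disjoint_Ioc_of_le le_rfl) measurableSet_Ioc
          (hint.mono_set (fun v hv => hv.1))
          (hint.mono_set (fun v hv => lt_of_lt_of_le (mem_Ioi.mp hw) hv.1.le)),
        Ioc_union_Ioc_eq_Ioc (mem_Ioi.mp hw).le h]
  have hderiv : HasDerivAt (fun w => GG α β k p q (u/2) + ∫ t in (u/2)..w, gg α β k p q t)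
      (gg α β k p q u) u := by
    apply HasDerivAt.const_add
    apply intervalIntegral.integral_hasDerivAt_right
    · rw [intervalIntegrable_iff_integrableOn_Ioc_of_le (by linarith)]
      exact hint.mono_set (fun v hv => lt_of_lt_of_le hu2 hv.1.le)
    · exact (gg_contOn hα hβ).stronglyMeasurableAtFilter isOpen_Ioi u hu
    · exact (gg_contOn hα hβ).continuousAt (Ioi_mem_nhds hu)
  apply hderiv.congr_of_eventuallyEq
  filter_upwards [Ioi_mem_nhds hu] with w hw
  exact claim w hw

include hα hβ in
private lemma stays_zero (x : ℝ → ℝ)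
    (hx : ∀ t : ℝ, 0 ≤ t →
      HasDerivAt x (-(α * |x t| ^ p + β * |x t| ^ q) ^ k * Real.sign (x t)) t)
    {t0 t1 : ℝ} (h0 : 0 ≤ t0) (h01 : t0 ≤ t1) (hx0 : x t0 = 0) : x t1 = 0 := by
  have hd : ∀ t ∈ Icc t0 t1, HasDerivAt (fun s => x s ^ 2)
      ((2:ℕ) * x t ^ 1 * (-(α * |x t| ^ p + β * |x t| ^ q) ^ k * Real.sign (x t))) t :=
    fun t ht => (hx t (h0.trans ht.1)).pow 2
  have hanti : AntitoneOn (fun s => x s ^ 2) (Icc t0 t1) := by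
    apply antitoneOn_of_deriv_nonpos (convex_Icc t0 t1)
    · exact fun t ht => ((hd t ht).continuousAt).continuousWithinAt
    · intro t ht
      rw [interior_Icc] at ht
      exact ((hd t (Ioo_subset_Icc_self ht)).differentiableAt).differentiableWithinAt
    · intro t ht
      rw [interior_Icc] at ht
      rw [(hd t (Ioo_subset_Icc_self ht)).deriv]
      have hS : (0:ℝ) ≤ (α * |x t| ^ p + β * |x t| ^ q) ^ k := by positivity
      have hsx : 0 ≤ x t * Real.sign (x t) := by
        rcases lt_trichotomy (x t) 0 with h | h | h
        · rw [Real.sign_of_neg h]; nlinarith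
        · simp [h]
        · rw [Real.sign_of_pos h]; nlinarith
      push_cast
      nlinarith
  have h1 : x t1 ^ 2 ≤ x t0 ^ 2 := hanti (left_mem_Icc.mpr h01) (right_mem_Icc.mpr h01) h01
  rw [hx0] at h1
  have := sq_nonneg (x t1)
  have : x t1 ^ 2 = 0 := le_antisymm (by simpa using h1) this
  exact sq_eq_zero_iff.mp this

include hα hβ hk hp hpq hkp hkq in
private lemma posCase (x : ℝ → ℝ)
    (hx : ∀ t : ℝ, 0 ≤ t →
      HasDerivAt x (-(α * |x t| ^ p + β * |x t| ^ q) ^ k * Real.sign (x t)) t)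
    {T : ℝ} (hT : 0 ≤ T) (hpos : ∀ t ∈ Icc 0 T, 0 < x t) :
    T + GG α β k p q (x T) ≤ GG α β k p q (x 0) := by
  have hd : ∀ t ∈ Icc 0 T, HasDerivAt (fun s => GG α β k p q (x s) + s) 0 t := by
    intro t ht
    have hxt : 0 < x t := hpos t ht
    have habs : |x t| = x t := abs_of_pos hxt
    have hS : 0 < α * x t ^ p + β * x t ^ q := by positivity
    have hx' := hx t ht.1
    rw [habs, Real.sign_of_pos hxt, mul_one] at hx'
    have hchain := ((GG_hasDeriv hα hβ hk hp hpq hkp hkq hxt).comp t hx').add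
      (hasDerivAt_id t)
    refine hchain.congr_deriv ?_
    symm
    show (0:ℝ) = (α * x t ^ p + β * x t ^ q) ^ (-k) * _ + 1
    rw [rpow_neg hS.le]
    field_simp
    ring
  have hanti : AntitoneOn (fun s => GG α β k p q (x s) + s) (Icc 0 T) := by
    apply antitoneOn_of_deriv_nonpos (convex_Icc 0 T)
    · exact fun t ht => ((hd t ht).continuousAt).continuousWithinAt
    · intro t ht
      rw [interior_Icc] at ht
      exact ((hd t (Ioo_subset_Icc_self ht)).differentiableAt).differentiableWithinAt
    · intro t ht
      rw [interior_Icc] at ht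
      rw [(hd t (Ioo_subset_Icc_self ht)).deriv]
  have := hanti (left_mem_Icc.mpr hT) (right_mem_Icc.mpr hT) hT
  simpa [add_comm] using this

end aux

/-- Fixed-time stability of `ẋ = -(α|x|^p + β|x|^q)^k sign(x)`: every solution
vanishes after the time `γ(ρ)`, uniformly in the initial condition. -/
theorem fixed_time_scalar
    (α β k p q : ℝ) (hα : 0 < α) (hβ : 0 < β) (hk : 0 < k)
    (hp : 0 < p) (hpq : p < q) (hkp : k * p < 1) (hkq : 1 < k * q)
    (γ : ℝ)
    (hγ : γ = Real.Gamma ((1 - k * p) / (q - p)) * Real.Gamma ((k * q - 1) / (q - p)) /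
        (α ^ k * Real.Gamma k * (q - p)) * (α / β) ^ ((1 - k * p) / (q - p)))
    (x : ℝ → ℝ)
    (hx : ∀ t : ℝ, 0 ≤ t →
      HasDerivAt x (-(α * |x t| ^ p + β * |x t| ^ q) ^ k * Real.sign (x t)) t) :
    ∀ t : ℝ, γ ≤ t → x t = 0 := by
  have hqp : (0:ℝ) < q - p := by linarith
  have hγint : (∫ v in Ioi (0:ℝ), gg α β k p q v) = γ := by
    rw [hγ, ← main_integral α β k p q hα hβ hk hp hpq hkp hkq]
    rfl
  have hγpos : 0 < γ := by
    rw [hγ]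
    have h1 := Real.Gamma_pos_of_pos (show (0:ℝ) < (1 - k * p) / (q - p) by
      apply div_pos (by linarith) hqp)
    have h2 := Real.Gamma_pos_of_pos (show (0:ℝ) < (k * q - 1) / (q - p) by
      apply div_pos (by linarith) hqp)
    have h3 := Real.Gamma_pos_of_pos hk
    have h4 : (0:ℝ) < α ^ k := rpow_pos_of_pos hα k
    have h5 : (0:ℝ) < (α / β) ^ ((1 - k * p) / (q - p)) :=
      rpow_pos_of_pos (div_pos hα hβ) _
    positivity
  intro t ht
  by_cases hzero : ∃ t0, t0 ∈ Icc 0 γ ∧ x t0 = 0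
  · obtain ⟨t0, ht0, hx0⟩ := hzero
    exact stays_zero hα hβ x hx ht0.1 (ht0.2.trans ht) hx0
  · exfalso
    push_neg at hzero
    have hcont : ContinuousOn x (Icc 0 γ) :=
      fun s hs => ((hx s hs.1).continuousAt).continuousWithinAt
    have hsign : (∀ s ∈ Icc 0 γ, 0 < x s) ∨ (∀ s ∈ Icc 0 γ, x s < 0) := by
      by_contra hcon
      push_neg at hcon
      obtain ⟨⟨s1, hs1, h1⟩, ⟨s2, hs2, h2⟩⟩ := hcon
      have h1' : x s1 < 0 := lt_of_le_of_ne h1 (hzero s1 hs1)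
      have h2' : 0 < x s2 := lt_of_le_of_ne h2 (Ne.symm (hzero s2 hs2))
      have hsub : uIcc s1 s2 ⊆ Icc 0 γ := uIcc_subset_Icc hs1 hs2
      have := intermediate_value_uIcc (hcont.mono hsub)
      have h0mem : (0:ℝ) ∈ uIcc (x s1) (x s2) := by
        rw [mem_uIcc]
        left
        exact ⟨h1'.le, h2'.le⟩
      obtain ⟨s0, hs0, hxs0⟩ := this h0mem
      exact hzero s0 (hsub hs0) hxs0
    rcases hsign with hsign | hsign
    · have hle := posCase hα hβ hk hp hpq hkp hkq x hx hγpos.le hsign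
      have hlt : GG α β k p q (x 0) < γ := by
        rw [← hγint]
        exact GG_lt hα hβ hk hp hpq hkp hkq (hsign 0 (left_mem_Icc.mpr hγpos.le))
      have hnn : 0 ≤ GG α β k p q (x γ) := GG_nonneg hα hβ
      linarith
    · set y : ℝ → ℝ := fun t => -x t with hy
      have hyx : ∀ t : ℝ, 0 ≤ t →
          HasDerivAt y (-(α * |y t| ^ p + β * |y t| ^ q) ^ k * Real.sign (y t)) t := by
        intro s hs
        have := (hx s hs).neg
        refine this.congr_deriv ?_
        symm
        show -(α * |-x s| ^ p + β * |-x s| ^ q) ^ k * Real.sign (-x s) = _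
        simp only [abs_neg, Real.sign_neg]
        ring
      have hypos : ∀ s ∈ Icc 0 γ, 0 < y s := fun s hs => neg_pos.mpr (hsign s hs)
      have hle := posCase hα hβ hk hp hpq hkp hkq y hyx hγpos.le hypos
      have hlt : GG α β k p q (y 0) < γ := by
        rw [← hγint]
        exact GG_lt hα hβ hk hp hpq hkp hkq (hypos 0 (left_mem_Icc.mpr hγpos.le))
      have hnn : 0 ≤ GG α β k p q (y γ) := GG_nonneg hα hβ
      linarith
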